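/- For every ε ∈ (0, π), ω > 0 and integer k ≥ 0 there exist constants c_k, δ > 0, depending only on ε, ω and k, such that (1 + y) s^k |(d/ds)^k (s E(s, y))| ≤ c_k √|λ| e^{−δ s y} for all λ ∈ Σ_ε with |λ| ≥ ω, all s > 0 and all y ≥ 0. -/

import Mathlib

open MeasureTheory Real

/-- Principal complex square root `√z = z^(1/2)` (principal branch of `cpow`). -/
noncomputable def csqrt (z : ℂ) : ℂ := z ^ (1/2 : ℂ)

/-- The sector `Σ_ε = {λ ∈ ℂ : λ ≠ 0, |Arg λ| < π − ε}`. -/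
def SigmaSector (ε : ℝ) : Set ℂ := {l : ℂ | l ≠ 0 ∧ |l.arg| < Real.pi - ε}

/-- Mikhlin condition (M) with constant `cbar`, with `K = ⌊(d+1)/2⌋`. -/
def CondM (d : ℕ) (m : EuclideanSpace ℝ (Fin (d-1)) → ℂ) (cbar : ℝ) : Prop :=
  ContDiffOn ℝ ((d+1)/2 : ℕ) m {ξ : EuclideanSpace ℝ (Fin (d-1)) | ξ ≠ 0} ∧
  ∀ k : ℕ, k ≤ (d+1)/2 → ∀ ξ : EuclideanSpace ℝ (Fin (d-1)), ξ ≠ 0 →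
    ‖ξ‖ ^ k * ‖iteratedFDerivWithin ℝ k m
        {ξ : EuclideanSpace ℝ (Fin (d-1)) | ξ ≠ 0} ξ‖ ≤ cbar

/-- Parameterized Mikhlin condition (M*) with constants `(cbar, δ)`, `K = ⌊(d+1)/2⌋`. -/
def CondMStar (d : ℕ) (m : EuclideanSpace ℝ (Fin (d-1)) → ℝ → ℂ) (cbar δ : ℝ) : Prop :=
  (∀ y : ℝ, 0 ≤ y →
    ContDiffOn ℝ ((d+1)/2 : ℕ) (fun ξ => m ξ y)
      {ξ : EuclideanSpace ℝ (Fin (d-1)) | ξ ≠ 0}) ∧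
  ∀ k : ℕ, k ≤ (d+1)/2 →
    ∀ ξ : EuclideanSpace ℝ (Fin (d-1)), ξ ≠ 0 → ∀ y : ℝ, 0 ≤ y →
      ‖ξ‖ ^ k * ‖iteratedFDerivWithin ℝ k (fun ξ => m ξ y)
          {ξ : EuclideanSpace ℝ (Fin (d-1)) | ξ ≠ 0} ξ‖ ≤
        cbar * Real.exp (-δ * ‖ξ‖ * y) / (1 + y)

/-- The fundamental multiplier `m₀(s, y)`. -/
noncomputable def m0 (l : ℂ) (α : ℝ) (s y : ℝ) : ℂ :=
  ((csqrt (l + (s:ℂ)^2) + s) / ((α:ℂ) + l + csqrt (l + (s:ℂ)^2) + s)) *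
    ((Complex.exp (-(y:ℂ) * csqrt (l + (s:ℂ)^2)) - Complex.exp (-(y:ℂ) * s)) / l)

/-- `E(s, y) = e^{-ys} - e^{-y√(λ+s²)}`. -/
noncomputable def Efun (l : ℂ) (s y : ℝ) : ℂ :=
  Complex.exp (-(y:ℂ) * s) - Complex.exp (-(y:ℂ) * csqrt (l + (s:ℂ)^2))



namespace Stmt15Aux

lemma exp_half_log {A : ℝ} (hA : 0 < A) : Real.exp (Real.log A / 2) = Real.sqrt A := by
  rw [Real.sqrt_eq_rpow, Real.rpow_def_of_pos hA]
  ring_nf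

lemma csqrt_mul_self {μ : ℂ} (hμ : μ ≠ 0) : csqrt μ * csqrt μ = μ := by
  rw [csqrt, ← Complex.cpow_add _ _ hμ]
  norm_num

lemma csqrt_re {μ : ℂ} (hμ : μ ≠ 0) :
    (csqrt μ).re = Real.sqrt (‖μ‖) * Real.cos (μ.arg / 2) := by
  rw [csqrt, Complex.cpow_def_of_ne_zero hμ, Complex.exp_re]
  have h1 : (Complex.log μ * (1/2 : ℂ)).re = Real.log (‖μ‖) / 2 := by
    simp [Complex.mul_re, Complex.log_re, Complex.log_im]; ring
  have h2 : (Complex.log μ * (1/2 : ℂ)).im = μ.arg / 2 := by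
    simp [Complex.mul_im, Complex.log_re, Complex.log_im]; ring
  rw [h1, h2, exp_half_log (norm_pos_iff.mpr hμ)]

lemma csqrt_abs {μ : ℂ} (hμ : μ ≠ 0) :
    ‖csqrt μ‖ = Real.sqrt (‖μ‖) := by
  rw [csqrt, Complex.cpow_def_of_ne_zero hμ, Complex.norm_exp]
  have h1 : (Complex.log μ * (1/2 : ℂ)).re = Real.log (‖μ‖) / 2 := by
    simp [Complex.mul_re, Complex.log_re, Complex.log_im]; ring
  rw [h1, exp_half_log (norm_pos_iff.mpr hμ)]

lemma abs_arg_le_of_re {w : ℂ} (hw : w ≠ 0) {θ : ℝ} (hθ0 : 0 ≤ θ) (hθπ : θ ≤ Real.pi)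
    (h : Real.cos θ * ‖w‖ ≤ w.re) : |w.arg| ≤ θ := by
  by_contra hc
  push_neg at hc
  have h1 : Real.cos |w.arg| < Real.cos θ :=
    Real.strictAntiOn_cos ⟨hθ0, hθπ⟩ ⟨abs_nonneg _, Complex.abs_arg_le_pi w⟩ hc
  rw [Real.cos_abs] at h1
  have h2 : Real.cos w.arg = w.re / ‖w‖ := Complex.cos_arg hw
  have h3 : 0 < ‖w‖ := norm_pos_iff.mpr hw
  nlinarith [(div_le_iff₀ h3).mp (le_of_eq h2.symm)]

lemma re_ge_of_abs_arg_le {w : ℂ} (hw : w ≠ 0) {θ : ℝ} (hθπ : θ ≤ Real.pi)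
    (h : |w.arg| ≤ θ) : Real.cos θ * ‖w‖ ≤ w.re := by
  have h1 : Real.cos θ ≤ Real.cos |w.arg| :=
    Real.cos_le_cos_of_nonneg_of_le_pi (abs_nonneg _) hθπ h
  rw [Real.cos_abs] at h1
  have h2 : Real.cos w.arg = w.re / ‖w‖ := Complex.cos_arg hw
  have h3 : 0 < ‖w‖ := norm_pos_iff.mpr hw
  nlinarith [(div_le_iff₀ h3).mp (le_of_eq h2.symm), (le_div_iff₀ h3).mp (le_of_eq h2)]

end Stmt15Aux

namespace Stmt15Aux

lemma abs_exp_sub_exp_le (a b : ℂ) {M : ℝ} (ha : a.re ≤ M) (hb : b.re ≤ M) :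
    ‖Complex.exp a - Complex.exp b‖ ≤ ‖a - b‖ * Real.exp M := by
  have key : Complex.exp a - Complex.exp b
      = ∫ t in (0:ℝ)..1, (a - b) * Complex.exp (b + t • (a - b)) := by
    have h : ∀ t ∈ Set.uIcc (0:ℝ) 1, HasDerivAt (fun u : ℝ => Complex.exp (b + u • (a - b)))
        ((a - b) * Complex.exp (b + t • (a - b))) t := by
      intro t _
      have h1 : HasDerivAt (fun u : ℝ => b + u • (a - b)) (a - b) t := by
        simpa using ((hasDerivAt_id t).smul_const (a - b)).const_add b
      simpa [mul_comm] using h1.cexp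
    have := intervalIntegral.integral_eq_sub_of_hasDerivAt h ?_
    · rw [this]; simp
    · apply Continuous.intervalIntegrable
      exact continuous_const.mul (Complex.continuous_exp.comp (by continuity))
  rw [key]
  have hb' : ∀ t ∈ Set.Icc (0:ℝ) 1,
      ‖(a - b) * Complex.exp (b + t • (a - b))‖ ≤ ‖a - b‖ * Real.exp M := by
    intro t ht
    rw [norm_mul, Complex.norm_exp]
    refine mul_le_mul_of_nonneg_left ?_ (norm_nonneg _)
    apply Real.exp_le_exp.mpr
    have : (b + t • (a - b)).re = (1 - t) * b.re + t * a.re := by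
      simp [Complex.add_re, Complex.smul_re, Complex.sub_re]; ring
    rw [this]
    nlinarith [ht.1, ht.2]
  calc ‖∫ t in (0:ℝ)..1, (a - b) * Complex.exp (b + t • (a - b))‖
      ≤ ‖a - b‖ * Real.exp M * |1 - 0| := by
        apply intervalIntegral.norm_integral_le_of_norm_le_const
        intro t ht
        exact hb' t (by simpa [Set.uIoc_of_le (zero_le_one)] using Set.mem_Icc_of_Ioc ht)
    _ = ‖a - b‖ * Real.exp M := by norm_num

lemma cauchy_bound {f : ℂ → ℂ} {c : ℂ} {r C : ℝ} (hr : 0 < r)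
    (hd : DifferentiableOn ℂ f (Metric.closedBall c r))
    (hC : ∀ z ∈ Metric.closedBall c r, ‖f z‖ ≤ C) (n : ℕ) :
    ‖iteratedDeriv n f c‖ ≤ (Nat.factorial n : ℝ) * C / r ^ n := by
  lift r to NNReal using hr.le with R hR
  have hR0 : 0 < R := by exact_mod_cast hr
  have hps : HasFPowerSeriesOnBall f (cauchyPowerSeries f c R) c R :=
    hd.hasFPowerSeriesOnBall hR0
  have hiter : iteratedDeriv n f c = (Nat.factorial n) • (cauchyPowerSeries f c R n fun _ => (1:ℂ)) := by
    rw [iteratedDeriv_eq_iteratedFDeriv, ← hps.factorial_smul (1:ℂ) n]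
  have hCnn : 0 ≤ C := le_trans (norm_nonneg _) (hC c (Metric.mem_closedBall_self hr.le))
  have hcont : ContinuousOn (fun θ : ℝ => ‖f (circleMap c R θ)‖) (Set.uIcc (0:ℝ) (2*Real.pi)) := by
    apply ContinuousOn.norm
    exact hd.continuousOn.comp (continuous_circleMap c R).continuousOn
      (fun θ _ => Metric.sphere_subset_closedBall (circleMap_mem_sphere c R.coe_nonneg θ))
  have hnorm : ‖cauchyPowerSeries f c R n‖ ≤ C * ((R:ℝ)⁻¹) ^ n := by
    refine le_trans (norm_cauchyPowerSeries_le f c R n) ?_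
    rw [abs_of_nonneg (R.coe_nonneg)]
    refine mul_le_mul_of_nonneg_right ?_ (by positivity)
    have hint : (∫ θ : ℝ in (0:ℝ)..2 * Real.pi, ‖f (circleMap c R θ)‖) ≤ 2 * Real.pi * C := by
      calc (∫ θ : ℝ in (0:ℝ)..2 * Real.pi, ‖f (circleMap c R θ)‖)
          ≤ ∫ _ : ℝ in (0:ℝ)..2 * Real.pi, C := by
            apply intervalIntegral.integral_mono_on Real.two_pi_pos.le
              (hcont.intervalIntegrable) intervalIntegrable_const
            intro θ _
            exact hC _ (Metric.sphere_subset_closedBall (circleMap_mem_sphere c R.coe_nonneg θ))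
        _ = 2 * Real.pi * C := by simp [mul_comm]
    calc (2 * Real.pi)⁻¹ * ∫ θ : ℝ in (0:ℝ)..2 * Real.pi, ‖f (circleMap c R θ)‖
        ≤ (2 * Real.pi)⁻¹ * (2 * Real.pi * C) := mul_le_mul_of_nonneg_left hint (by positivity)
      _ = C := by field_simp
  have happ : ‖cauchyPowerSeries f c R n fun _ => (1:ℂ)‖ ≤ C * ((R:ℝ)⁻¹) ^ n := by
    refine le_trans ((cauchyPowerSeries f c R n).le_opNorm _) ?_
    simpa using hnorm
  rw [hiter, nsmul_eq_mul, norm_mul, Complex.norm_natCast]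
  calc (n.factorial : ℝ) * ‖(cauchyPowerSeries f c (↑R) n) fun _ => (1:ℂ)‖
      ≤ (n.factorial : ℝ) * (C * ((R:ℝ)⁻¹) ^ n) :=
        mul_le_mul_of_nonneg_left happ (by positivity)
    _ = (Nat.factorial n : ℝ) * C / (R:ℝ) ^ n := by rw [inv_pow]; ring

lemma iteratedDeriv_ofReal_comp {F : ℂ → ℂ} {U : Set ℂ} (hU : IsOpen U)
    (hF : DifferentiableOn ℂ F U) (n : ℕ) : ∀ {t : ℝ}, (t:ℂ) ∈ U →
    iteratedDeriv n (fun x : ℝ => F x) t = iteratedDeriv n F t := by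
  have hFa : AnalyticOnNhd ℂ F U := hF.analyticOnNhd hU
  induction n with
  | zero => intro t _; simp
  | succ n IH =>
    intro t ht
    have hVopen : IsOpen {x : ℝ | (x:ℂ) ∈ U} := hU.preimage Complex.continuous_ofReal
    have hev : (fun x : ℝ => iteratedDeriv n (fun x : ℝ => F x) x)
        =ᶠ[nhds t] (fun x : ℝ => iteratedDeriv n F x) := by
      filter_upwards [hVopen.mem_nhds ht] with x hx
      exact IH hx
    rw [iteratedDeriv_succ, iteratedDeriv_succ, hev.deriv_eq]
    have hda : AnalyticOnNhd ℂ (iteratedDeriv n F) U := by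
      rw [iteratedDeriv_eq_iterate]
      exact hFa.iterated_deriv n
    have : HasDerivAt (iteratedDeriv n F) (deriv (iteratedDeriv n F) t) (t:ℂ) :=
      ((hda t ht).differentiableAt).hasDerivAt
    exact this.comp_ofReal.deriv

end Stmt15Aux


namespace Stmt15Aux

/-- `u.re * (1 + cos φ) + u.im * sin φ = 2|u| cos(arg u - φ/2) cos(φ/2)` -/
lemma term_eq {u : ℂ} (hu : u ≠ 0) (φ : ℝ) :
    u.re * (1 + Real.cos φ) + u.im * Real.sin φ =
      2 * ‖u‖ * (Real.cos (u.arg - φ/2) * Real.cos (φ/2)) := by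
  have hre : u.re = ‖u‖ * Real.cos u.arg := by
    rw [Complex.cos_arg hu]
    field_simp [norm_ne_zero_iff.mpr hu]
  have him : u.im = ‖u‖ * Real.sin u.arg := by
    rw [Complex.sin_arg]
    field_simp [norm_ne_zero_iff.mpr hu]
  have h1 : Real.cos u.arg + Real.cos (u.arg - φ) =
      2 * Real.cos (u.arg - φ/2) * Real.cos (φ/2) := by
    have := Real.cos_add_cos u.arg (u.arg - φ)
    convert this using 3 <;> ring
  have h2 : Real.cos (u.arg - φ) = Real.cos u.arg * Real.cos φ + Real.sin u.arg * Real.sin φ :=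
    Real.cos_sub _ _
  rw [hre, him]
  linear_combination ‖u‖ * h1 - ‖u‖ * h2

lemma re_rot_le_abs (μ : ℂ) (φ : ℝ) : μ.re * Real.cos φ + μ.im * Real.sin φ ≤ ‖μ‖ := by
  have h1 : (μ.re * Real.cos φ + μ.im * Real.sin φ)^2 ≤ (‖μ‖)^2 := by
    rw [Complex.sq_norm, Complex.normSq_apply]
    nlinarith [sq_nonneg (μ.re * Real.sin φ - μ.im * Real.cos φ), Real.sin_sq_add_cos_sq φ]
  nlinarith [norm_nonneg μ]

end Stmt15Aux

namespace Stmt15Aux2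
open Stmt15Aux

/-- Key lower bound, case `0 ≤ Im l`. -/
lemma key_nonneg_im {ε : ℝ} (hε0 : 0 < ε) (hεπ : ε ≤ Real.pi) {l w : ℂ}
    (hl0 : l ≠ 0) (hla : |l.arg| ≤ Real.pi - ε) (him : 0 ≤ l.im)
    (hw0 : w ≠ 0) (hbw : |w.arg| ≤ ε/4) :
    2 * Real.sin (ε/4) * Real.sin (ε/2) * (‖l‖ + ‖w‖) ≤
      ‖l + w‖ + (l + w).re := by
  set φ : ℝ := Real.pi - ε with hφ
  have hπ := Real.pi_pos
  have hπ2 : ε/2 ≤ Real.pi/2 := by linarith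
  have hcosφ2 : Real.cos (φ/2) = Real.sin (ε/2) := by
    rw [show φ/2 = Real.pi/2 - ε/2 by rw [hφ]; ring, Real.cos_pi_div_two_sub]
  have hs4 : 0 < Real.sin (ε/4) := Real.sin_pos_of_pos_of_lt_pi (by linarith) (by linarith)
  have hs2 : 0 < Real.sin (ε/2) := Real.sin_pos_of_pos_of_lt_pi (by linarith) (by linarith)
  have hs42 : Real.sin (ε/4) ≤ Real.sin (ε/2) := by
    apply Real.strictMonoOn_sin.monotoneOn ⟨by linarith, by linarith⟩ ⟨by linarith, by linarith⟩
    linarith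
  -- arg l ∈ [0, φ]
  have hal : l.arg ∈ Set.Icc 0 φ := by
    constructor
    · exact Complex.arg_nonneg_iff.mpr him
    · calc l.arg ≤ |l.arg| := le_abs_self _
        _ ≤ φ := hla
  -- cos bound for the l term
  have hcl : Real.sin (ε/2) ≤ Real.cos (l.arg - φ/2) := by
    rw [← hcosφ2, ← Real.cos_abs (l.arg - φ/2)]
    apply Real.cos_le_cos_of_nonneg_of_le_pi (abs_nonneg _) (by rw [hφ]; linarith)
    rw [abs_le]
    constructor <;> [linarith [hal.1]; linarith [hal.2]]
  -- cos bound for the w term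
  have hcw : Real.sin (ε/4) ≤ Real.cos (w.arg - φ/2) := by
    rw [show Real.sin (ε/4) = Real.cos (Real.pi/2 - ε/4) by rw [Real.cos_pi_div_two_sub],
      ← Real.cos_abs (w.arg - φ/2)]
    apply Real.cos_le_cos_of_nonneg_of_le_pi (abs_nonneg _) (by linarith)
    have h1 := abs_le.mp hbw
    rw [abs_le]
    constructor <;> simp only [hφ] at * <;> linarith [h1.1, h1.2]
  have habs : (l+w).re * Real.cos φ + (l+w).im * Real.sin φ ≤ ‖l+w‖ :=
    re_rot_le_abs _ _
  have hterml := term_eq hl0 φ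
  have htermw := term_eq hw0 φ
  have hl_lb : 2 * ‖l‖ * (Real.sin (ε/4) * Real.sin (ε/2)) ≤
      l.re * (1 + Real.cos φ) + l.im * Real.sin φ := by
    rw [hterml]
    have := norm_nonneg l
    apply mul_le_mul_of_nonneg_left _ (by positivity)
    exact mul_le_mul (by linarith) (le_of_eq hcosφ2.symm) (le_of_lt hs2) (by nlinarith)
  have hw_lb : 2 * ‖w‖ * (Real.sin (ε/4) * Real.sin (ε/2)) ≤
      w.re * (1 + Real.cos φ) + w.im * Real.sin φ := by
    rw [htermw]
    apply mul_le_mul_of_nonneg_left _ (by positivity)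
    exact mul_le_mul hcw (le_of_eq hcosφ2.symm) (le_of_lt hs2) (by nlinarith)
  have hsplit : (l+w).re * (1 + Real.cos φ) + (l+w).im * Real.sin φ =
      (l.re * (1 + Real.cos φ) + l.im * Real.sin φ) +
      (w.re * (1 + Real.cos φ) + w.im * Real.sin φ) := by
    simp [Complex.add_re, Complex.add_im]; ring
  nlinarith [habs, hl_lb, hw_lb, hsplit]
end Stmt15Aux2

namespace Stmt15Aux2
lemma abs_arg_conj_le {x : ℂ} {θ : ℝ} (hθ : θ < Real.pi) (h : |x.arg| ≤ θ) :
    |(starRingEnd ℂ x).arg| ≤ θ := by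
  rw [Complex.arg_conj]
  split_ifs with h1
  · exfalso; rw [h1] at h; rw [abs_of_pos Real.pi_pos] at h; linarith
  · rwa [abs_neg]

/-- Key lower bound, general case. -/
lemma key {ε : ℝ} (hε0 : 0 < ε) (hεπ : ε ≤ Real.pi) {l w : ℂ}
    (hl0 : l ≠ 0) (hla : |l.arg| ≤ Real.pi - ε)
    (hw0 : w ≠ 0) (hbw : |w.arg| ≤ ε/4) :
    2 * Real.sin (ε/4) * Real.sin (ε/2) * (‖l‖ + ‖w‖) ≤
      ‖l + w‖ + (l + w).re := by
  rcases le_or_gt 0 l.im with him | him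
  · exact key_nonneg_im hε0 hεπ hl0 hla him hw0 hbw
  · have h4 : ε/4 < Real.pi := by linarith
    have hεp : Real.pi - ε < Real.pi := by linarith
    have := key_nonneg_im hε0 hεπ (l := starRingEnd ℂ l) (w := starRingEnd ℂ w)
      (by simpa using hl0)
      (abs_arg_conj_le hεp hla)
      (by simp [Complex.conj_im]; linarith)
      (by simpa using hw0)
      (abs_arg_conj_le h4 hbw)
    rw [← map_add (starRingEnd ℂ), Complex.norm_conj, Complex.norm_conj, Complex.norm_conj,
      Complex.conj_re] at this
    exact this
end Stmt15Aux2

namespace Stmt15Main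
open Stmt15Aux Stmt15Aux2

noncomputable def crad (ε : ℝ) : ℝ := min (1/2) (ε/26)
noncomputable def del0 (ε : ℝ) : ℝ := Real.sqrt (Real.sin (ε/4) * Real.sin (ε/2))

lemma crad_pos {ε : ℝ} (hε : 0 < ε) : 0 < crad ε := lt_min (by norm_num) (by linarith)
lemma crad_le_half (ε : ℝ) : crad ε ≤ 1/2 := min_le_left _ _
lemma crad_le (ε : ℝ) : crad ε ≤ ε/26 := min_le_right _ _

lemma del0_pos {ε : ℝ} (hε0 : 0 < ε) (hεπ : ε ≤ Real.pi) : 0 < del0 ε := by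
  have hs4 : 0 < Real.sin (ε/4) := Real.sin_pos_of_pos_of_lt_pi (by linarith)
    (by linarith [Real.pi_pos])
  have hs2 : 0 < Real.sin (ε/2) := Real.sin_pos_of_pos_of_lt_pi (by linarith)
    (by linarith [Real.pi_pos])
  exact Real.sqrt_pos.mpr (by positivity)

lemma del0_sq {ε : ℝ} (hε0 : 0 < ε) (hεπ : ε ≤ Real.pi) :
    del0 ε ^ 2 = Real.sin (ε/4) * Real.sin (ε/2) := by
  have hs4 : 0 < Real.sin (ε/4) := Real.sin_pos_of_pos_of_lt_pi (by linarith)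
    (by linarith [Real.pi_pos])
  have hs2 : 0 < Real.sin (ε/2) := Real.sin_pos_of_pos_of_lt_pi (by linarith)
    (by linarith [Real.pi_pos])
  exact Real.sq_sqrt (by positivity)

set_option maxHeartbeats 1000000 in
/-- All the geometric facts about points in the ball. -/
lemma geom {ε : ℝ} (hε0 : 0 < ε) (hεπ : ε ≤ Real.pi) {l : ℂ} (hl0 : l ≠ 0)
    (hla : |l.arg| ≤ Real.pi - ε) {s : ℝ} (hs : 0 < s) {z : ℂ}
    (hz : ‖z - (s:ℂ)‖ ≤ crad ε * s) :
    (1 - crad ε) * s ≤ z.re ∧ ‖z‖ ≤ 2*s ∧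
    (0 < (l + z^2).re ∨ (l + z^2).im ≠ 0) ∧
    del0 ε * Real.sqrt (‖l‖) ≤ (csqrt (l + z^2)).re ∧
    del0 ε * ‖z‖ ≤ (csqrt (l + z^2)).re ∧
    ‖z - csqrt (l + z^2)‖ ≤ Real.sqrt (‖l‖) / del0 ε := by
  have hπ := Real.pi_pos
  have hcr0 := crad_pos hε0
  have hcrh := crad_le_half ε
  have hcre := crad_le ε
  have hd0 := del0_pos hε0 hεπ
  have hd0sq := del0_sq hε0 hεπ
  have hre_z : (1 - crad ε) * s ≤ z.re := by
    have h1 : |(z - (s:ℂ)).re| ≤ ‖z - (s:ℂ)‖ := Complex.abs_re_le_norm _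
    simp only [Complex.sub_re, Complex.ofReal_re] at h1
    have := abs_le.mp (h1.trans hz)
    nlinarith
  have him_z : |z.im| ≤ crad ε * s := by
    have h1 : |(z - (s:ℂ)).im| ≤ ‖z - (s:ℂ)‖ := Complex.abs_im_le_norm _
    simp only [Complex.sub_im, Complex.ofReal_im, sub_zero] at h1
    exact h1.trans hz
  have hre_z2 : s/2 ≤ z.re := by nlinarith
  have habs_z : ‖z‖ ≤ 2*s := by
    calc ‖z‖ = ‖(s:ℂ) + (z - s)‖ := by ring_nf
      _ ≤ ‖(s:ℂ)‖ + ‖z - (s:ℂ)‖ := norm_add_le _ _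
      _ ≤ s + crad ε * s := by
          rw [Complex.norm_of_nonneg hs.le]; linarith
      _ ≤ 2*s := by nlinarith
  have hz0 : z ≠ 0 := by
    intro h
    rw [h] at hre_z2
    simp at hre_z2
    linarith
  have hw0 : z^2 ≠ 0 := pow_ne_zero _ hz0
  have habsw : ‖z^2‖ = z.re*z.re + z.im*z.im := by
    rw [norm_pow, Complex.sq_norm, Complex.normSq_apply]
  have hw_re : (z^2).re = z.re*z.re - z.im*z.im := by
    rw [sq, Complex.mul_re]
  -- |arg z²| ≤ ε/4
  have hargw : |(z^2).arg| ≤ ε/4 := by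
    apply abs_arg_le_of_re hw0 (by linarith) (by linarith)
    rw [habsw, hw_re]
    have hcos : Real.cos (ε/4) ≤ 1 - ε^2/80 := by
      have h1 := Real.cos_le_one_sub_mul_cos_sq (x := ε/4)
        (by rw [abs_of_pos (by linarith)]; linarith)
      have hπ2 : Real.pi^2 ≤ 10 := by nlinarith [Real.pi_lt_d2, Real.pi_pos]
      have hπp : (0:ℝ) < Real.pi^2 := by positivity
      have h2 : (1:ℝ)/5 ≤ 2 / Real.pi^2 := by
        rw [div_le_div_iff₀ (by norm_num) hπp]
        linarith
      have h3 : ε^2/80 ≤ 2 / Real.pi^2 * (ε/4)^2 := by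
        have := mul_le_mul_of_nonneg_right h2 (sq_nonneg (ε/4))
        calc ε^2/80 = 1/5 * (ε/4)^2 := by ring
          _ ≤ 2 / Real.pi^2 * (ε/4)^2 := this
      linarith
    have hcosm1 : -1 ≤ Real.cos (ε/4) := Real.neg_one_le_cos _
    have hcos1 : Real.cos (ε/4) ≤ 1 := Real.cos_le_one _
    have hy2 : z.im*z.im ≤ ε^2 * (z.re*z.re) / 169 := by
      have h3 : z.im*z.im ≤ (crad ε * s)*(crad ε * s) := by
        nlinarith [abs_nonneg z.im, sq_abs z.im, him_z]
      have h4 : crad ε * s ≤ ε/26 * (2*z.re) := by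
        have e1 : 0 ≤ (ε/26 - crad ε) * s := mul_nonneg (by linarith) hs.le
        have e2 : 0 ≤ ε/26 * (2*z.re - s) :=
          mul_nonneg (by linarith) (by linarith)
        linarith
      have h5 : (crad ε * s)*(crad ε * s) ≤ (ε/26*(2*z.re))*(ε/26*(2*z.re)) :=
        mul_le_mul h4 h4 (mul_nonneg hcr0.le hs.le)
          (mul_nonneg (by linarith) (by linarith))
      have h6 : (ε/26*(2*z.re))*(ε/26*(2*z.re)) = ε^2*(z.re*z.re)/169 := by ring
      linarith
    have ha : 0 ≤ z.re*z.re := mul_self_nonneg _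
    have hb : 0 ≤ z.im*z.im := mul_self_nonneg _
    have e1 : 0 ≤ (1 - ε^2/80 - Real.cos (ε/4)) * (z.re*z.re) :=
      mul_nonneg (by linarith) ha
    have e2 : 0 ≤ (1 - Real.cos (ε/4)) * (z.im*z.im) := mul_nonneg (by linarith) hb
    have e3 : 0 ≤ ε^2 * (z.re*z.re) := mul_nonneg (sq_nonneg ε) ha
    nlinarith [e1, e2, e3, hy2]
  -- key lower bound
  have hkey := Stmt15Aux2.key hε0 hεπ hl0 hla hw0 hargw
  have hLpos : 0 < ‖l‖ := norm_pos_iff.mpr hl0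
  have hWnn : 0 ≤ ‖z^2‖ := norm_nonneg _
  have hs4 : 0 < Real.sin (ε/4) := Real.sin_pos_of_pos_of_lt_pi (by linarith) (by linarith)
  have hs2 : 0 < Real.sin (ε/2) := Real.sin_pos_of_pos_of_lt_pi (by linarith) (by linarith)
  have hcpos : 0 < 2 * Real.sin (ε/4) * Real.sin (ε/2) := by positivity
  have hsumpos : 0 < ‖l‖ + ‖z^2‖ := by linarith
  have hprodpos : 0 < 2 * Real.sin (ε/4) * Real.sin (ε/2) *
      (‖l‖ + ‖z^2‖) := mul_pos hcpos hsumpos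
  have hμ0 : l + z^2 ≠ 0 := by
    intro h
    rw [h] at hkey
    simp only [norm_zero, Complex.zero_re, add_zero] at hkey
    linarith
  have hslit : 0 < (l + z^2).re ∨ (l + z^2).im ≠ 0 := by
    by_contra hcon
    push_neg at hcon
    obtain ⟨h1, h2⟩ := hcon
    have habsμ : ‖l + z^2‖ = -(l + z^2).re := by
      rw [Complex.norm_def, Complex.normSq_apply, h2]
      rw [show (l+z^2).re * (l+z^2).re + 0*0 = (-(l+z^2).re)^2 by ring]
      exact Real.sqrt_sq (by linarith)
    rw [habsμ] at hkey
    linarith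
  set w₀ := csqrt (l + z^2) with hw₀def
  have hw₀sq : w₀ * w₀ = l + z^2 := csqrt_mul_self hμ0
  have hre_sq : w₀.re^2 = (‖l + z^2‖ + (l + z^2).re) / 2 := by
    have h1 : (l + z^2).re = w₀.re*w₀.re - w₀.im*w₀.im := by
      rw [← hw₀sq, Complex.mul_re]
    have h2 : ‖l + z^2‖ = w₀.re*w₀.re + w₀.im*w₀.im := by
      rw [← Real.sq_sqrt (norm_nonneg (l + z^2)), ← csqrt_abs hμ0,
        Complex.sq_norm, Complex.normSq_apply]
    nlinarith
  have hre_nn : 0 ≤ w₀.re := by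
    rw [hw₀def, csqrt_re hμ0]
    apply mul_nonneg (Real.sqrt_nonneg _)
    apply Real.cos_nonneg_of_mem_Icc
    constructor
    · linarith [Complex.neg_pi_lt_arg (l + z^2)]
    · linarith [Complex.arg_le_pi (l + z^2)]
  have hlow : del0 ε^2 * (‖l‖ + ‖z^2‖) ≤ w₀.re^2 := by
    rw [hre_sq, hd0sq]
    nlinarith
  have P4 : del0 ε * Real.sqrt (‖l‖) ≤ w₀.re := by
    have h1 : (del0 ε * Real.sqrt (‖l‖))^2 ≤ w₀.re^2 := by
      rw [mul_pow, Real.sq_sqrt hLpos.le]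
      nlinarith
    nlinarith [mul_nonneg hd0.le (Real.sqrt_nonneg (‖l‖)), hre_nn]
  have P5 : del0 ε * ‖z‖ ≤ w₀.re := by
    have habsw2 : ‖z^2‖ = (‖z‖)^2 := by rw [norm_pow]
    have h1 : (del0 ε * ‖z‖)^2 ≤ w₀.re^2 := by
      rw [mul_pow]
      nlinarith [hlow, habsw2]
    nlinarith [mul_nonneg hd0.le (norm_nonneg z), hre_nn]
  have P6 : ‖z - w₀‖ ≤ Real.sqrt (‖l‖) / del0 ε := by
    have hfac : (z - w₀) * (z + w₀) = -l := by
      have : (z - w₀) * (z + w₀) = z^2 - w₀ * w₀ := by ring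
      rw [this, hw₀sq]; ring
    have habs_fac : ‖z - w₀‖ * ‖z + w₀‖ = ‖l‖ := by
      rw [← norm_mul, hfac, norm_neg]
    have hB : del0 ε * Real.sqrt (‖l‖) ≤ ‖z + w₀‖ := by
      calc del0 ε * Real.sqrt (‖l‖) ≤ w₀.re := P4
        _ ≤ (z + w₀).re := by simp only [Complex.add_re]; linarith
        _ ≤ ‖z + w₀‖ := Complex.re_le_norm _
    have hsL : 0 < Real.sqrt (‖l‖) := Real.sqrt_pos.mpr hLpos
    rw [le_div_iff₀ hd0]
    have hLs : ‖l‖ = Real.sqrt (‖l‖) * Real.sqrt (‖l‖) :=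
      (Real.mul_self_sqrt hLpos.le).symm
    nlinarith [norm_nonneg (z - w₀), habs_fac, hB, hsL]
  exact ⟨hre_z, habs_z, hslit, P4, P5, P6⟩



noncomputable def del1 (ε : ℝ) : ℝ := min 1 (del0 ε) / 4

lemma del1_pos {ε : ℝ} (hε0 : 0 < ε) (hεπ : ε ≤ Real.pi) : 0 < del1 ε := by
  have := del0_pos hε0 hεπ
  rw [del1]
  have : 0 < min 1 (del0 ε) := lt_min one_pos this
  linarith

lemma del1_le_quarter (ε : ℝ) : del1 ε ≤ 1/4 := by
  rw [del1]; have := min_le_left 1 (del0 ε); linarith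

lemma del1_le_del0_quarter (ε : ℝ) : del1 ε ≤ del0 ε / 4 := by
  rw [del1]; have := min_le_right 1 (del0 ε); linarith

/-- `x e^{-d x} ≤ (2/d) e^{-dx/2}` -/
lemma x_exp_le {d x : ℝ} (hd : 0 < d) (hx : 0 ≤ x) :
    x * Real.exp (-(d*x)) ≤ 2/d * Real.exp (-(d*x)/2) := by
  have h1 : d*x/2 ≤ Real.exp (d*x/2) := by
    have := Real.add_one_le_exp (d*x/2)
    linarith
  have h2 : x ≤ 2/d * Real.exp (d*x/2) := by
    rw [div_mul_eq_mul_div, le_div_iff₀ hd]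
    nlinarith
  have h3 : 0 < Real.exp (-(d*x)) := Real.exp_pos _
  calc x * Real.exp (-(d*x)) ≤ (2/d * Real.exp (d*x/2)) * Real.exp (-(d*x)) :=
        mul_le_mul_of_nonneg_right h2 h3.le
    _ = 2/d * Real.exp (-(d*x)/2) := by
        rw [mul_assoc, ← Real.exp_add]
        ring_nf

/-- The final purely real estimate. -/
lemma final_est {d0 d1 rω sqL s y : ℝ} (hd0 : 0 < d0) (hd1 : 0 < d1) (hrω : 0 < rω)
    (hsqL : rω ≤ sqL) (hs : 0 < s) (hy : 0 ≤ y) :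
    (1+y) * (min (4*s) (2*s*(y*sqL/d0)) * Real.exp (-(d1*(s*y)))) ≤
      ((1+d0/rω)*(4/(d0*d1)) + 8/(d1*rω) + 8/(d0*d1)) * sqL * Real.exp (-(d1*(s*y))/2) := by
  have hsqL0 : 0 < sqL := lt_of_lt_of_le hrω hsqL
  set x := s*y with hx
  have hx0 : 0 ≤ x := mul_nonneg hs.le hy
  have hE : 0 < Real.exp (-(d1*x)) := Real.exp_pos _
  have hE2 : 0 < Real.exp (-(d1*x)/2) := Real.exp_pos _
  have hxe := x_exp_le hd1 hx0
  have hEE2 : Real.exp (-(d1*x)) ≤ Real.exp (-(d1*x)/2) := by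
    apply Real.exp_le_exp.mpr
    nlinarith [mul_nonneg hd1.le hx0]
  rcases le_or_gt (y*sqL) d0 with hcase | hcase
  · -- small case
    have hymax : y ≤ d0/rω := by
      rw [le_div_iff₀ hrω]
      nlinarith
    have hmin : min (4*s) (2*s*(y*sqL/d0)) ≤ 2*s*(y*sqL/d0) := min_le_right _ _
    have hminnn : 0 ≤ 2*s*(y*sqL/d0) := by positivity
    have step1 : (1+y) * (min (4*s) (2*s*(y*sqL/d0)) * Real.exp (-(d1*x))) ≤
        (1+d0/rω) * (2*s*(y*sqL/d0) * Real.exp (-(d1*x))) := by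
      have hminpos : 0 ≤ min (4*s) (2*s*(y*sqL/d0)) := le_min (by positivity) hminnn
      exact mul_le_mul (by linarith) (mul_le_mul_of_nonneg_right hmin hE.le)
        (mul_nonneg hminpos hE.le) (by positivity)
    have step2 : 2*s*(y*sqL/d0) * Real.exp (-(d1*x)) ≤ (2*sqL/d0) * (x * Real.exp (-(d1*x))) := by
      rw [show 2*s*(y*sqL/d0) * Real.exp (-(d1*x)) = (2*sqL/d0) * ((s*y) * Real.exp (-(d1*x))) by ring]
    have step3 : (2*sqL/d0) * (x * Real.exp (-(d1*x))) ≤ (2*sqL/d0) * (2/d1 * Real.exp (-(d1*x)/2)) :=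
      mul_le_mul_of_nonneg_left hxe (by positivity)
    calc (1+y) * (min (4*s) (2*s*(y*sqL/d0)) * Real.exp (-(d1*x)))
        ≤ (1+d0/rω) * (2*s*(y*sqL/d0) * Real.exp (-(d1*x))) := step1
      _ ≤ (1+d0/rω) * ((2*sqL/d0) * (2/d1 * Real.exp (-(d1*x)/2))) := by
          apply mul_le_mul_of_nonneg_left _ (by positivity)
          calc 2*s*(y*sqL/d0) * Real.exp (-(d1*x)) = (2*sqL/d0) * (x * Real.exp (-(d1*x))) := by
                rw [hx]; ring
            _ ≤ (2*sqL/d0) * (2/d1 * Real.exp (-(d1*x)/2)) := step3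
      _ = (1+d0/rω)*(4/(d0*d1)) * sqL * Real.exp (-(d1*x)/2) := by
          field_simp; ring
      _ ≤ ((1+d0/rω)*(4/(d0*d1)) + 8/(d1*rω) + 8/(d0*d1)) * sqL * Real.exp (-(d1*x)/2) := by
          apply mul_le_mul_of_nonneg_right _ hE2.le
          apply mul_le_mul_of_nonneg_right _ hsqL0.le
          have : 0 < 8/(d1*rω) := by positivity
          have : 0 < 8/(d0*d1) := by positivity
          linarith
  · -- large case
    have hmin : min (4*s) (2*s*(y*sqL/d0)) ≤ 4*s := min_le_left _ _
    have h1le : 1 ≤ y*sqL/d0 := by rw [le_div_iff₀ hd0]; linarith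
    have hsle : s ≤ x*sqL/d0 := by
      calc s = s * 1 := (mul_one s).symm
        _ ≤ s * (y*sqL/d0) := mul_le_mul_of_nonneg_left h1le hs.le
        _ = x*sqL/d0 := by rw [hx]; ring
    have hterm2 : 4*(x * Real.exp (-(d1*x))) ≤ 8/(d1*rω) * sqL * Real.exp (-(d1*x)/2) := by
      calc 4*(x * Real.exp (-(d1*x))) ≤ 4*(2/d1 * Real.exp (-(d1*x)/2)) :=
            mul_le_mul_of_nonneg_left hxe (by norm_num)
        _ = 8/d1 * Real.exp (-(d1*x)/2) := by ring
        _ ≤ 8/(d1*rω) * sqL * Real.exp (-(d1*x)/2) := by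
            apply mul_le_mul_of_nonneg_right _ hE2.le
            rw [div_mul_eq_mul_div, div_le_div_iff₀ hd1 (by positivity)]
            nlinarith
    have hterm1 : 4*(s * Real.exp (-(d1*x))) ≤ 8/(d0*d1) * sqL * Real.exp (-(d1*x)/2) := by
      calc 4*(s * Real.exp (-(d1*x))) ≤ 4*((x*sqL/d0) * Real.exp (-(d1*x))) := by
            apply mul_le_mul_of_nonneg_left (mul_le_mul_of_nonneg_right hsle hE.le) (by norm_num)
        _ = 4*sqL/d0 * (x * Real.exp (-(d1*x))) := by ring
        _ ≤ 4*sqL/d0 * (2/d1 * Real.exp (-(d1*x)/2)) :=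
            mul_le_mul_of_nonneg_left hxe (by positivity)
        _ = 8/(d0*d1) * sqL * Real.exp (-(d1*x)/2) := by
            field_simp; ring
    have hys : (1+y) * (4*s) * Real.exp (-(d1*x)) =
        4*(s * Real.exp (-(d1*x))) + 4*(x * Real.exp (-(d1*x))) := by
      rw [hx]; ring
    calc (1+y) * (min (4*s) (2*s*(y*sqL/d0)) * Real.exp (-(d1*x)))
        ≤ (1+y) * ((4*s) * Real.exp (-(d1*x))) := by
          apply mul_le_mul_of_nonneg_left (mul_le_mul_of_nonneg_right hmin hE.le) (by linarith)
      _ = 4*(s * Real.exp (-(d1*x))) + 4*(x * Real.exp (-(d1*x))) := by rw [hx]; ring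
      _ ≤ 8/(d0*d1) * sqL * Real.exp (-(d1*x)/2) + 8/(d1*rω) * sqL * Real.exp (-(d1*x)/2) := by
          linarith [hterm1, hterm2]
      _ ≤ ((1+d0/rω)*(4/(d0*d1)) + 8/(d1*rω) + 8/(d0*d1)) * sqL * Real.exp (-(d1*x)/2) := by
          have h0 : 0 ≤ (1+d0/rω)*(4/(d0*d1)) * sqL * Real.exp (-(d1*x)/2) := by positivity
          have hexpand : ((1+d0/rω)*(4/(d0*d1)) + 8/(d1*rω) + 8/(d0*d1)) * sqL * Real.exp (-(d1*x)/2)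
              = (1+d0/rω)*(4/(d0*d1)) * sqL * Real.exp (-(d1*x)/2)
                + 8/(d1*rω) * sqL * Real.exp (-(d1*x)/2)
                + 8/(d0*d1) * sqL * Real.exp (-(d1*x)/2) := by ring
          linarith

end Stmt15Main

namespace Stmt15Main
open Stmt15Aux Stmt15Aux2

lemma ball_bound {ε : ℝ} (hε0 : 0 < ε) (hεπ : ε ≤ Real.pi) {l : ℂ} (hl0 : l ≠ 0)
    (hla : |l.arg| ≤ Real.pi - ε) {s y : ℝ} (hs : 0 < s) (hy : 0 ≤ y) {z : ℂ}
    (hz : ‖z - (s:ℂ)‖ ≤ crad ε * s) :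
    ‖z * (Complex.exp (-(y:ℂ)*z) - Complex.exp (-(y:ℂ) * csqrt (l + z^2)))‖ ≤
      min (4*s) (2*s*(y*Real.sqrt (‖l‖)/del0 ε)) * Real.exp (-(del1 ε*(s*y))) := by
  obtain ⟨P1, P2, P3, P4, P5, P6⟩ := geom hε0 hεπ hl0 hla hs hz
  have hd0 := del0_pos hε0 hεπ
  have hd1 := del1_pos hε0 hεπ
  have hd1q := del1_le_quarter ε
  have hd1d0 := del1_le_del0_quarter ε
  have hcrh := crad_le_half ε
  have hrez : del1 ε * s ≤ z.re := by nlinarith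
  have hrew : del1 ε * s ≤ (csqrt (l + z^2)).re := by
    have h1 : z.re ≤ ‖z‖ := Complex.re_le_norm z
    have hzreh : s/2 ≤ z.re := by nlinarith
    have h2 : del0 ε * z.re ≤ del0 ε * ‖z‖ := mul_le_mul_of_nonneg_left h1 hd0.le
    have h3 : del0 ε * (s/2) ≤ del0 ε * z.re := mul_le_mul_of_nonneg_left hzreh hd0.le
    nlinarith
  have hE : (0:ℝ) < Real.exp (-(del1 ε*(s*y))) := Real.exp_pos _
  have hre_a : (-(y:ℂ)*z).re ≤ -(del1 ε*(s*y)) := by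
    have : (-(y:ℂ)*z).re = -(y*z.re) := by
      simp [Complex.mul_re]
    rw [this]
    nlinarith
  have hre_b : (-(y:ℂ) * csqrt (l + z^2)).re ≤ -(del1 ε*(s*y)) := by
    have : (-(y:ℂ) * csqrt (l + z^2)).re = -(y*(csqrt (l + z^2)).re) := by
      simp [Complex.mul_re]
    rw [this]
    nlinarith
  have habs1 : ‖Complex.exp (-(y:ℂ)*z)‖ ≤ Real.exp (-(del1 ε*(s*y))) := by
    rw [Complex.norm_exp]; exact Real.exp_le_exp.mpr hre_a
  have habs2 : ‖Complex.exp (-(y:ℂ) * csqrt (l + z^2))‖ ≤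
      Real.exp (-(del1 ε*(s*y))) := by
    rw [Complex.norm_exp]; exact Real.exp_le_exp.mpr hre_b
  have hdiff1 : ‖Complex.exp (-(y:ℂ)*z) - Complex.exp (-(y:ℂ) * csqrt (l + z^2))‖
      ≤ 2 * Real.exp (-(del1 ε*(s*y))) := by
    calc ‖Complex.exp (-(y:ℂ)*z) - Complex.exp (-(y:ℂ) * csqrt (l + z^2))‖
        ≤ ‖Complex.exp (-(y:ℂ)*z)‖ +
          ‖Complex.exp (-(y:ℂ) * csqrt (l + z^2))‖ := by
            simpa using norm_sub_le (Complex.exp (-(y:ℂ)*z))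
              (Complex.exp (-(y:ℂ) * csqrt (l + z^2)))
      _ ≤ 2 * Real.exp (-(del1 ε*(s*y))) := by linarith
  have hdiff2 : ‖Complex.exp (-(y:ℂ)*z) - Complex.exp (-(y:ℂ) * csqrt (l + z^2))‖
      ≤ (y*Real.sqrt (‖l‖)/del0 ε) * Real.exp (-(del1 ε*(s*y))) := by
    have h1 := abs_exp_sub_exp_le (-(y:ℂ)*z) (-(y:ℂ) * csqrt (l + z^2)) hre_a hre_b
    have h2 : ‖-(y:ℂ)*z - -(y:ℂ) * csqrt (l + z^2)‖ =
        y * ‖z - csqrt (l + z^2)‖ := by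
      rw [show -(y:ℂ)*z - -(y:ℂ) * csqrt (l + z^2) = -(y:ℂ) * (z - csqrt (l + z^2)) by ring]
      rw [norm_mul, norm_neg, Complex.norm_of_nonneg hy]
    rw [h2] at h1
    refine h1.trans ?_
    apply mul_le_mul_of_nonneg_right _ hE.le
    rw [div_eq_mul_inv, mul_assoc, ← div_eq_mul_inv]
    apply mul_le_mul_of_nonneg_left P6 hy
  rw [norm_mul, min_mul_of_nonneg _ _ hE.le]
  apply le_min
  · calc ‖z‖ * ‖Complex.exp (-(y:ℂ)*z) -
          Complex.exp (-(y:ℂ) * csqrt (l + z^2))‖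
        ≤ (2*s) * (2 * Real.exp (-(del1 ε*(s*y)))) :=
          mul_le_mul P2 hdiff1 (norm_nonneg _) (by linarith)
      _ = 4*s * Real.exp (-(del1 ε*(s*y))) := by ring
  · calc ‖z‖ * ‖Complex.exp (-(y:ℂ)*z) -
          Complex.exp (-(y:ℂ) * csqrt (l + z^2))‖
        ≤ (2*s) * ((y*Real.sqrt (‖l‖)/del0 ε) * Real.exp (-(del1 ε*(s*y)))) :=
          mul_le_mul P2 hdiff2 (norm_nonneg _) (by linarith)
      _ = 2*s*(y*Real.sqrt (‖l‖)/del0 ε) * Real.exp (-(del1 ε*(s*y))) := by ring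

lemma Fdiff {ε : ℝ} (hε0 : 0 < ε) (hεπ : ε ≤ Real.pi) {l : ℂ} (hl0 : l ≠ 0)
    (hla : |l.arg| ≤ Real.pi - ε) {s y : ℝ} (hs : 0 < s) {z : ℂ}
    (hz : ‖z - (s:ℂ)‖ ≤ crad ε * s) :
    DifferentiableAt ℂ
      (fun z : ℂ => z * (Complex.exp (-(y:ℂ)*z) - Complex.exp (-(y:ℂ) * csqrt (l + z^2)))) z := by
  obtain ⟨_, _, P3, _⟩ := geom hε0 hεπ hl0 hla hs hz
  have h1 : DifferentiableAt ℂ (fun z : ℂ => l + z^2) z :=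
    (differentiableAt_const l).add (differentiableAt_pow 2)
  have h2 : DifferentiableAt ℂ (fun z : ℂ => csqrt (l + z^2)) z := by
    simp only [csqrt]
    exact h1.cpow (differentiableAt_const _) (by simpa [Complex.mem_slitPlane_iff] using P3)
  exact differentiableAt_id.mul
    (((differentiableAt_id.const_mul (-(y:ℂ))).cexp).sub ((h2.const_mul (-(y:ℂ))).cexp))

end Stmt15Main



open Stmt15Aux Stmt15Aux2 Stmt15Main

/-- `(1+y) s^k |(d/ds)^k (s E(s,y))| ≤ c_k √|λ| e^{-δ s y}`. -/
theorem stmt_15 (ε ω : ℝ) (hε : ε ∈ Set.Ioo 0 Real.pi) (hω : 0 < ω) (k : ℕ) :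
    ∃ cₖ δ : ℝ, 0 < cₖ ∧ 0 < δ ∧
      ∀ l ∈ SigmaSector ε, ω ≤ ‖l‖ → ∀ s y : ℝ, 0 < s → 0 ≤ y →
        (1 + y) * s ^ k *
            ‖iteratedDeriv k (fun t : ℝ => (t:ℂ) * Efun l t y) s‖ ≤
          cₖ * Real.sqrt (‖l‖) * Real.exp (-δ * s * y) := by
  obtain ⟨hε0, hεπ'⟩ := hε
  have hεπ : ε ≤ Real.pi := le_of_lt hεπ'
  have hcr0 : 0 < crad ε := crad_pos hε0
  have hd0 : 0 < del0 ε := del0_pos hε0 hεπ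
  have hd1 : 0 < del1 ε := del1_pos hε0 hεπ
  have hsqω : 0 < Real.sqrt ω := Real.sqrt_pos.mpr hω
  have hfact : (0:ℝ) < (Nat.factorial k : ℝ) := by
    exact_mod_cast Nat.factorial_pos k
  set BigC : ℝ := (1 + del0 ε/Real.sqrt ω)*(4/(del0 ε*del1 ε)) +
      8/(del1 ε*Real.sqrt ω) + 8/(del0 ε*del1 ε) with hBigC
  have hBigCpos : 0 < BigC := by
    rw [hBigC]
    have h1 : 0 < (1 + del0 ε/Real.sqrt ω)*(4/(del0 ε*del1 ε)) := by positivity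
    have h2 : 0 < 8/(del1 ε*Real.sqrt ω) := by positivity
    have h3 : 0 < 8/(del0 ε*del1 ε) := by positivity
    linarith
  refine ⟨(Nat.factorial k : ℝ)/(crad ε)^k * BigC, del1 ε / 2, by positivity, by positivity,
    ?_⟩
  intro l hl hωl s y hs hy
  obtain ⟨hl0, hlarg⟩ := hl
  have hla : |l.arg| ≤ Real.pi - ε := le_of_lt hlarg
  have hLpos : 0 < ‖l‖ := lt_of_lt_of_le hω hωl
  have hsqL : Real.sqrt ω ≤ Real.sqrt (‖l‖) := Real.sqrt_le_sqrt hωl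
  have hrs : 0 < crad ε * s := mul_pos hcr0 hs
  set F : ℂ → ℂ := fun z : ℂ =>
    z * (Complex.exp (-(y:ℂ)*z) - Complex.exp (-(y:ℂ) * csqrt (l + z^2))) with hF
  have hmem : ∀ z ∈ Metric.closedBall (s:ℂ) (crad ε * s),
      ‖z - (s:ℂ)‖ ≤ crad ε * s := by
    intro z hzm
    rwa [Metric.mem_closedBall, Complex.dist_eq] at hzm
  have hdiffcb : DifferentiableOn ℂ F (Metric.closedBall (s:ℂ) (crad ε * s)) :=
    fun z hzm => (Fdiff hε0 hεπ hl0 hla hs (hmem z hzm)).differentiableWithinAt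
  have hfun : (fun t : ℝ => (t:ℂ) * Efun l t y) = fun t : ℝ => F (t:ℂ) := by
    funext t
    simp only [hF, Efun]
  have hrestrict : iteratedDeriv k (fun t : ℝ => F (t:ℂ)) s = iteratedDeriv k F (s:ℂ) :=
    iteratedDeriv_ofReal_comp Metric.isOpen_ball
      (hdiffcb.mono Metric.ball_subset_closedBall) k (Metric.mem_ball_self hrs)
  set Cb : ℝ := min (4*s) (2*s*(y*Real.sqrt (‖l‖)/del0 ε)) *
      Real.exp (-(del1 ε*(s*y))) with hCb
  have hC : ∀ z ∈ Metric.closedBall (s:ℂ) (crad ε * s), ‖F z‖ ≤ Cb :=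
    fun z hzm => ball_bound hε0 hεπ hl0 hla hs hy (hmem z hzm)
  have hcauchy := cauchy_bound hrs hdiffcb hC k
  have hCbnn : 0 ≤ Cb := le_trans (norm_nonneg _)
    (hC _ (Metric.mem_closedBall_self hrs.le))
  have hmid : (1 + y) * s ^ k * ‖iteratedDeriv k F (s:ℂ)‖ ≤
      (Nat.factorial k : ℝ)/(crad ε)^k * ((1+y) * Cb) := by
    have h1 : (1 + y) * s ^ k * ‖iteratedDeriv k F (s:ℂ)‖ ≤
        (1 + y) * s ^ k * ((Nat.factorial k : ℝ) * Cb / (crad ε * s) ^ k) := by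
      apply mul_le_mul_of_nonneg_left hcauchy (by positivity)
    refine h1.trans_eq ?_
    rw [mul_pow]
    field_simp
  have hfe := final_est hd0 hd1 hsqω hsqL hs hy
  calc (1 + y) * s ^ k * ‖iteratedDeriv k (fun t : ℝ => (t:ℂ) * Efun l t y) s‖
      = (1 + y) * s ^ k * ‖iteratedDeriv k F (s:ℂ)‖ := by
        rw [hfun, hrestrict]
    _ ≤ (Nat.factorial k : ℝ)/(crad ε)^k * ((1+y) * Cb) := hmid
    _ ≤ (Nat.factorial k : ℝ)/(crad ε)^k *
        (BigC * Real.sqrt (‖l‖) * Real.exp (-(del1 ε*(s*y))/2)) := by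
        apply mul_le_mul_of_nonneg_left _ (by positivity)
        rw [hCb]
        exact hfe
    _ = (Nat.factorial k : ℝ)/(crad ε)^k * BigC * Real.sqrt (‖l‖) *
        Real.exp (-(del1 ε / 2) * s * y) := by
        rw [show -(del1 ε*(s*y))/2 = -(del1 ε / 2) * s * y by ring]
        ring
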